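/- For any finite sequence x_1,...,x_m of unit vectors in C^n with n ≥ 1, the inequality (n+1)·n/2 · Σ_{i,j} |⟨x_i, x_j⟩|^4 ≥ m^2 holds. -/

import Mathlib

open Finset Complex


lemma sum_swap4 {M α β γ δ : Type*} [AddCommMonoid M] [Fintype α] [Fintype β] [Fintype γ]
    [Fintype δ] (f : α → β → γ → δ → M) :
    ∑ i, ∑ j, ∑ p, ∑ q, f i j p q = ∑ p, ∑ q, ∑ i, ∑ j, f i j p q := by
  calc ∑ i, ∑ j, ∑ p, ∑ q, f i j p q
      = ∑ i, ∑ p, ∑ j, ∑ q, f i j p q :=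
        Finset.sum_congr rfl fun i _ => Finset.sum_comm
    _ = ∑ p, ∑ i, ∑ j, ∑ q, f i j p q := Finset.sum_comm
    _ = ∑ p, ∑ i, ∑ q, ∑ j, f i j p q :=
        Finset.sum_congr rfl fun p _ => Finset.sum_congr rfl fun i _ => Finset.sum_comm
    _ = ∑ p, ∑ q, ∑ i, ∑ j, f i j p q :=
        Finset.sum_congr rfl fun p _ => Finset.sum_comm

theorem welch_bound_k2_unit_vectors (n m : ℕ) (hn : 1 ≤ n)
    (x : Fin m → EuclideanSpace ℂ (Fin n)) (hx : ∀ i, ‖x i‖ = 1) :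
    ((n + 1) * n / 2 : ℝ) * ∑ i, ∑ j, ‖(inner ℂ (x i) (x j) : ℂ)‖ ^ 4 ≥ (m : ℝ) ^ 2 := by
  classical
  set W : Fin m → Fin n × Fin n → ℂ := fun i p => x i p.1 * x i p.2 with hW
  -- inner product squared
  have hz2 : ∀ i j, (inner ℂ (x i) (x j) : ℂ) ^ 2 = ∑ p : Fin n × Fin n,
      (starRingEnd ℂ) (W i p) * W j p := by
    intro i j
    have h1 : (inner ℂ (x i) (x j) : ℂ) = ∑ a, (starRingEnd ℂ) (x i a) * x j a := by
      simp [PiLp.inner_apply, RCLike.inner_apply, mul_comm]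
    rw [h1, sq, Finset.sum_mul_sum, Fintype.sum_prod_type]
    refine Fintype.sum_congr _ _ fun a => Fintype.sum_congr _ _ fun b => ?_
    simp only [hW, map_mul]
    ring
  set M : Fin n × Fin n → Fin n × Fin n → ℂ :=
    fun p q => ∑ i, (starRingEnd ℂ) (W i p) * W i q with hM
  have main : ∑ i, ∑ j, ‖(inner ℂ (x i) (x j) : ℂ)‖ ^ 4
      = ∑ p : Fin n × Fin n, ∑ q : Fin n × Fin n, Complex.normSq (M p q) := by
    have h4 : ∀ i j, ‖(inner ℂ (x i) (x j) : ℂ)‖ ^ 4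
        = Complex.normSq ((inner ℂ (x i) (x j) : ℂ) ^ 2) := by
      intro i j
      rw [map_pow, Complex.normSq_eq_norm_sq]
      ring
    simp only [h4]
    have cast : ((∑ i, ∑ j, Complex.normSq ((inner ℂ (x i) (x j) : ℂ) ^ 2) : ℝ) : ℂ)
        = ((∑ p : Fin n × Fin n, ∑ q : Fin n × Fin n, Complex.normSq (M p q) : ℝ) : ℂ) := by
      push_cast
      simp only [← Complex.mul_conj]
      have expand1 : ∀ i j, ((inner ℂ (x i) (x j) : ℂ) ^ 2)
            * (starRingEnd ℂ) ((inner ℂ (x i) (x j) : ℂ) ^ 2)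
          = ∑ p : Fin n × Fin n, ∑ q : Fin n × Fin n,
              ((starRingEnd ℂ) (W i p) * W j p) * (W i q * (starRingEnd ℂ) (W j q)) := by
        intro i j
        rw [hz2, map_sum, Finset.sum_mul_sum]
        refine Finset.sum_congr rfl fun p _ => Finset.sum_congr rfl fun q _ => ?_
        simp only [map_mul, RingHomCompTriple.comp_apply, RingHom.id_apply, Complex.conj_conj]
      have expand2 : ∀ (p q : Fin n × Fin n), M p q * (starRingEnd ℂ) (M p q)
          = ∑ i, ∑ j, ((starRingEnd ℂ) (W i p) * W i q) * (W j p * (starRingEnd ℂ) (W j q)) := by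
        intro p q
        rw [hM, map_sum, Finset.sum_mul_sum]
        refine Finset.sum_congr rfl fun i _ => Finset.sum_congr rfl fun j _ => ?_
        simp only [map_mul, Complex.conj_conj]
      simp only [expand1, expand2]
      rw [sum_swap4]
      refine Finset.sum_congr rfl fun p _ => Finset.sum_congr rfl fun q _ =>
        Finset.sum_congr rfl fun i _ => Finset.sum_congr rfl fun j _ => ?_
      ring
    exact_mod_cast cast
  set r : Fin n × Fin n → ℝ := fun p => ∑ i, Complex.normSq (W i p) with hr
  have hrnn : ∀ p, 0 ≤ r p := fun p => Finset.sum_nonneg fun i _ => Complex.normSq_nonneg _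
  have hWswap : ∀ i (p : Fin n × Fin n), W i p.swap = W i p := by
    intro i p; simp [hW, mul_comm]
  have hMpp : ∀ p, M p p = (r p : ℂ) := by
    intro p
    rw [hM, hr]
    push_cast
    exact Finset.sum_congr rfl fun i _ => by rw [mul_comm, Complex.mul_conj]
  have hMswap : ∀ p, M p p.swap = (r p : ℂ) := by
    intro p
    rw [← hMpp]
    exact Finset.sum_congr rfl fun i _ => by rw [hWswap]
  set c : Fin n × Fin n → ℝ := fun p => if p.1 = p.2 then 1 else 2 with hc
  have lower : ∀ p : Fin n × Fin n, c p * (r p) ^ 2 ≤ ∑ q, Complex.normSq (M p q) := by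
    intro p
    by_cases h : p.1 = p.2
    · have h1 : Complex.normSq (M p p) ≤ ∑ q, Complex.normSq (M p q) :=
        Finset.single_le_sum (fun q _ => Complex.normSq_nonneg _) (Finset.mem_univ p)
      rw [hMpp, Complex.normSq_ofReal] at h1
      rw [hc]
      simp only [h, if_pos]
      nlinarith [h1]
    · have hps : p ≠ p.swap := by
        intro hp
        exact h (congrArg Prod.fst hp)
      have h1 : ∑ q ∈ ({p, p.swap} : Finset (Fin n × Fin n)), Complex.normSq (M p q)
          ≤ ∑ q, Complex.normSq (M p q) :=
        Finset.sum_le_sum_of_subset_of_nonneg (Finset.subset_univ _)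
          (fun q _ _ => Complex.normSq_nonneg _)
      rw [Finset.sum_pair hps, hMpp, hMswap, Complex.normSq_ofReal] at h1
      rw [hc]
      simp only [h, if_neg, if_false]
      nlinarith [h1]
  have lower2 : ∑ p : Fin n × Fin n, c p * (r p) ^ 2
      ≤ ∑ p : Fin n × Fin n, ∑ q : Fin n × Fin n, Complex.normSq (M p q) :=
    Finset.sum_le_sum fun p _ => lower p
  have hnorm1 : ∀ i, ∑ a, Complex.normSq (x i a) = 1 := by
    intro i
    have h := hx i
    rw [EuclideanSpace.norm_eq] at h
    have hnn : (0:ℝ) ≤ ∑ a, ‖x i a‖ ^ 2 := Finset.sum_nonneg fun a _ => sq_nonneg _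
    have h2 : ∑ a, ‖x i a‖ ^ 2 = 1 := by nlinarith [Real.sq_sqrt hnn]
    simpa [Complex.sq_norm] using h2
  have trace : ∑ p : Fin n × Fin n, r p = (m : ℝ) := by
    rw [hr, Finset.sum_comm]
    have hone : ∀ i, ∑ p : Fin n × Fin n, Complex.normSq (W i p) = 1 := by
      intro i
      rw [Fintype.sum_prod_type]
      simp only [hW, Complex.normSq_mul]
      rw [← Finset.sum_mul_sum, hnorm1 i, one_mul]
    simp [hone]
  have csum : ∑ p : Fin n × Fin n, 1 / c p = ((n + 1) * n / 2 : ℝ) := by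
    rw [hc, Fintype.sum_prod_type]
    have : ∀ a : Fin n, ∑ b : Fin n,
        (1 / (if (a, b).1 = (a, b).2 then (1:ℝ) else 2)) = (n : ℝ) / 2 + 1 / 2 := by
      intro a
      have : ∀ b : Fin n, (1 / (if (a, b).1 = (a, b).2 then (1:ℝ) else 2))
          = 1 / 2 + (if a = b then (1:ℝ)/2 else 0) := by
        intro b
        by_cases h : a = b <;> simp [h] <;> norm_num
      simp only [this, Finset.sum_add_distrib, Finset.sum_const, Finset.sum_ite_eq,
        Finset.mem_univ, if_pos, Finset.card_univ, Fintype.card_fin, nsmul_eq_mul]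
      ring
    simp only [this, Finset.sum_const, Finset.card_univ, Fintype.card_fin, nsmul_eq_mul]
    ring
  have hcpos : ∀ p, (0:ℝ) < c p := by
    intro p
    rw [hc]
    by_cases h : p.1 = p.2 <;> simp [h]
  have CS : (∑ p : Fin n × Fin n, r p) ^ 2
      ≤ (∑ p : Fin n × Fin n, 1 / c p) * ∑ p : Fin n × Fin n, c p * (r p) ^ 2 := by
    have h := Finset.sum_mul_sq_le_sq_mul_sq Finset.univ
      (fun p => Real.sqrt (1 / c p)) (fun p => Real.sqrt (c p) * r p)
    have e1 : ∀ p : Fin n × Fin n, Real.sqrt (1 / c p) * (Real.sqrt (c p) * r p) = r p := by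
      intro p
      rw [← mul_assoc, ← Real.sqrt_mul (by positivity), one_div_mul_cancel (hcpos p).ne',
        Real.sqrt_one, one_mul]
    have e2 : ∀ p : Fin n × Fin n, Real.sqrt (1 / c p) ^ 2 = 1 / c p := by
      intro p; rw [Real.sq_sqrt (by positivity)]
    have e3 : ∀ p : Fin n × Fin n, (Real.sqrt (c p) * r p) ^ 2 = c p * (r p) ^ 2 := by
      intro p; rw [mul_pow, Real.sq_sqrt (hcpos p).le]
    simpa only [e1, e2, e3] using h
  rw [ge_iff_le, main]
  calc (m : ℝ) ^ 2 = (∑ p : Fin n × Fin n, r p) ^ 2 := by rw [trace]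
    _ ≤ (∑ p : Fin n × Fin n, 1 / c p) * ∑ p : Fin n × Fin n, c p * (r p) ^ 2 := CS
    _ = ((n + 1) * n / 2 : ℝ) * ∑ p : Fin n × Fin n, c p * (r p) ^ 2 := by rw [csum]
    _ ≤ ((n + 1) * n / 2 : ℝ) * ∑ p : Fin n × Fin n, ∑ q : Fin n × Fin n,
          Complex.normSq (M p q) := by
        apply mul_le_mul_of_nonneg_left lower2
        positivity
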